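/- Let g : ℝᵐ → ℝ ∪ {+∞} be convex and lower semicontinuous, let F : ℝⁿ → ℝᵐ have continuously differentiable components, let x̄ ∈ ℝⁿ satisfy F(x̄) ∈ int(dom g), let Δ̄ > 0, let {F̃_Δ : Δ ∈ (0, Δ̄)} be fully linear models of F at x̄ with constants κ_F > 0 and κ_G > 0, and suppose F̃_Δ(x̄) = F(x̄) for all Δ ∈ (0, Δ̄). Let M = sup{‖w‖ : w ∈ ∂g(F(x̄))} (finite since F(x̄) ∈ int(dom g)). Then for every Δ ∈ (0, Δ̄) and every ṽ ∈ ∇F̃_Δ(x̄)ᵀ ∂g(F(x̄)) there exists v ∈ ∇F(x̄)ᵀ ∂g(F(x̄)) such that ‖v − ṽ‖ ≤ M √m κ_G Δ. -/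

import Mathlib

open Metric Set

/-- The (convex) subdifferential of an extended-real-valued function `g` at `z̄`:
`∂g(z̄) = {w : g(z) ≥ g(z̄) + ⟨w, z − z̄⟩ for all z}`. -/
def ERealSubdiff {m : ℕ} (g : EuclideanSpace ℝ (Fin m) → EReal)
    (zbar : EuclideanSpace ℝ (Fin m)) : Set (EuclideanSpace ℝ (Fin m)) :=
  {w | ∀ z, g zbar + ((inner ℝ w (z - zbar) : ℝ) : EReal) ≤ g z}

lemma subdiff_coord_bound {m : ℕ} (g : EuclideanSpace ℝ (Fin m) → EReal)
    (hgbot : ∀ z, g z ≠ ⊥) (zbar : EuclideanSpace ℝ (Fin m))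
    (hdom : zbar ∈ interior {z | g z < ⊤}) :
    ∃ C : Fin m → ℝ, ∀ w ∈ ERealSubdiff g zbar, ∀ i, |w i| ≤ C i := by
  obtain ⟨r, hr, hball⟩ := Metric.mem_nhds_iff.mp (mem_interior_iff_mem_nhds.mp hdom)
  have hzbar : g zbar < ⊤ := hball (mem_ball_self hr)
  have hb : ((g zbar).toReal : EReal) = g zbar := EReal.coe_toReal hzbar.ne (hgbot zbar)
  set b := (g zbar).toReal with hbdef
  -- points zbar ± (r/2) eᵢ lie in the ball
  have hpt : ∀ (i : Fin m) (a : ℝ), |a| = r / 2 →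
      g (zbar + EuclideanSpace.single i a) < ⊤ := by
    intro i a ha
    apply hball
    simp only [mem_ball, dist_eq_norm, add_sub_cancel_left, EuclideanSpace.norm_single,
      Real.norm_eq_abs, ha]
    linarith
  have key : ∀ w ∈ ERealSubdiff g zbar, ∀ (i : Fin m) (a : ℝ), |a| = r / 2 →
      b + a * w i ≤ (g (zbar + EuclideanSpace.single i a)).toReal := by
    intro w hw i a ha
    have h1 := hw (zbar + EuclideanSpace.single i a)
    have hd : ((g (zbar + EuclideanSpace.single i a)).toReal : EReal)
        = g (zbar + EuclideanSpace.single i a) :=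
      EReal.coe_toReal (hpt i a ha).ne (hgbot _)
    rw [← hb, ← hd] at h1
    have h2 : (inner ℝ w ((zbar + EuclideanSpace.single i a) - zbar) : ℝ) = a * w i := by
      rw [add_sub_cancel_left, EuclideanSpace.inner_single_right]
      simp
    rw [h2, ← EReal.coe_add] at h1
    exact EReal.coe_le_coe_iff.mp h1
  refine ⟨fun i => (max (g (zbar + EuclideanSpace.single i (r/2))).toReal
      (g (zbar + EuclideanSpace.single i (-(r/2)))).toReal - b) / (r/2), ?_⟩
  intro w hw i
  have habs1 : |(r/2 : ℝ)| = r/2 := abs_of_pos (by linarith)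
  have habs2 : |(-(r/2) : ℝ)| = r/2 := by rw [abs_neg]; exact habs1
  have k1 := key w hw i (r/2) habs1
  have k2 := key w hw i (-(r/2)) habs2
  simp only []
  rw [le_div_iff₀ (by linarith : (0:ℝ) < r/2)]
  rcases abs_cases (w i) with ⟨h, _⟩ | ⟨h, _⟩ <;>
    nlinarith [le_max_left (g (zbar + EuclideanSpace.single i (r/2))).toReal
        (g (zbar + EuclideanSpace.single i (-(r/2)))).toReal,
      le_max_right (g (zbar + EuclideanSpace.single i (r/2))).toReal
        (g (zbar + EuclideanSpace.single i (-(r/2)))).toReal]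

lemma subdiff_bddAbove {m : ℕ} (g : EuclideanSpace ℝ (Fin m) → EReal)
    (hgbot : ∀ z, g z ≠ ⊥) (zbar : EuclideanSpace ℝ (Fin m))
    (hdom : zbar ∈ interior {z | g z < ⊤}) :
    BddAbove ((fun w => ‖w‖) '' ERealSubdiff g zbar) := by
  obtain ⟨C, hC⟩ := subdiff_coord_bound g hgbot zbar hdom
  refine ⟨Real.sqrt (∑ i, C i ^ 2), ?_⟩
  rintro _ ⟨w, hw, rfl⟩
  simp only []
  rw [EuclideanSpace.norm_eq]
  apply Real.sqrt_le_sqrt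
  apply Finset.sum_le_sum
  intro i _
  rw [Real.norm_eq_abs]
  exact pow_le_pow_left₀ (abs_nonneg _) (hC w hw i) 2

lemma sum_abs_le_sqrt_mul_norm {m : ℕ} (w : EuclideanSpace ℝ (Fin m)) :
    ∑ i, |w i| ≤ Real.sqrt m * ‖w‖ := by
  set s : EuclideanSpace ℝ (Fin m) := WithLp.toLp 2 (fun i => if 0 ≤ w i then (1:ℝ) else -1) with hs
  have h1 : (inner ℝ s w : ℝ) = ∑ i, |w i| := by
    rw [PiLp.inner_apply]
    apply Finset.sum_congr rfl
    intro i _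
    simp only [RCLike.inner_apply, conj_trivial, hs]
    rcases le_or_gt 0 (w i) with h | h
    · rw [if_pos h, abs_of_nonneg h, mul_one]
    · rw [if_neg (not_le.mpr h), abs_of_neg h]; ring
  have hsum : ∀ i : Fin m, ‖s i‖ ^ 2 = 1 := by
    intro i
    simp only [hs, Real.norm_eq_abs]
    rcases le_or_gt 0 (w i) with h | h
    · rw [if_pos h]; norm_num
    · rw [if_neg (not_le.mpr h)]; norm_num
  have h2 : ‖s‖ = Real.sqrt m := by
    rw [EuclideanSpace.norm_eq]
    congr 1
    rw [Finset.sum_congr rfl (fun i _ => hsum i), Finset.sum_const, Finset.card_univ,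
      Fintype.card_fin, nsmul_eq_mul, mul_one]
  calc ∑ i, |w i| = (inner ℝ s w : ℝ) := h1.symm
    _ ≤ ‖s‖ * ‖w‖ := real_inner_le_norm s w
    _ = Real.sqrt m * ‖w‖ := by rw [h2]

/-- **Subdifferential approximations** (Theorem 4.1, part 2). Under the assumptions that `g` is
convex lsc, `F(x̄) ∈ int(dom g)`, `F̃_Δ` are fully linear models of `F` at `x̄` with constants
`κF, κG`, and `F̃_Δ(x̄) = F(x̄)`, with `M = sup{‖w‖ : w ∈ ∂g(F(x̄))}`: for every `Δ ∈ (0, Δ̄)`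
and every `ṽ ∈ ∇F̃_Δ(x̄)ᵀ ∂g(F(x̄))` there exists `v ∈ ∇F(x̄)ᵀ ∂g(F(x̄))` with
`‖v − ṽ‖ ≤ M √m κG Δ`. -/
theorem subdifferential_approximation_bwd {n m : ℕ}
    (g : EuclideanSpace ℝ (Fin m) → EReal)
    (hgbot : ∀ z, g z ≠ ⊥)
    (hconv : Convex ℝ {p : EuclideanSpace ℝ (Fin m) × ℝ | g p.1 ≤ (p.2 : EReal)})
    (hlsc : IsClosed {p : EuclideanSpace ℝ (Fin m) × ℝ | g p.1 ≤ (p.2 : EReal)})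
    (F : Fin m → EuclideanSpace ℝ (Fin n) → ℝ)
    (hF : ∀ i, ContDiff ℝ 1 (F i))
    (xbar : EuclideanSpace ℝ (Fin n))
    (hdom : (WithLp.toLp 2 (fun i => F i xbar) : EuclideanSpace ℝ (Fin m)) ∈ interior {z | g z < ⊤})
    (Δbar κF κG : ℝ) (hΔbar : 0 < Δbar) (hκF : 0 < κF) (hκG : 0 < κG)
    (Ft : ℝ → Fin m → EuclideanSpace ℝ (Fin n) → ℝ)
    (hFtC1 : ∀ Δ ∈ Ioo (0:ℝ) Δbar, ∀ i, ContDiff ℝ 1 (Ft Δ i))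
    (hfl : ∀ Δ ∈ Ioo (0:ℝ) Δbar, ∀ i, ∀ y ∈ ball xbar Δ,
      |F i y - Ft Δ i y| ≤ κF * Δ ^ 2 ∧
      ‖gradient (F i) y - gradient (Ft Δ i) y‖ ≤ κG * Δ)
    (hcenter : ∀ Δ ∈ Ioo (0:ℝ) Δbar, ∀ i, Ft Δ i xbar = F i xbar)
    (M : ℝ)
    (hM : M = sSup ((fun w => ‖w‖) ''
      ERealSubdiff g (WithLp.toLp 2 (fun i => F i xbar) : EuclideanSpace ℝ (Fin m)))) :
    ∀ Δ ∈ Ioo (0:ℝ) Δbar,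
      ∀ vt ∈ (fun w : EuclideanSpace ℝ (Fin m) => ∑ i, w i • gradient (Ft Δ i) xbar) ''
        ERealSubdiff g (WithLp.toLp 2 (fun i => F i xbar) : EuclideanSpace ℝ (Fin m)),
      ∃ v ∈ (fun w : EuclideanSpace ℝ (Fin m) => ∑ i, w i • gradient (F i) xbar) ''
        ERealSubdiff g (WithLp.toLp 2 (fun i => F i xbar) : EuclideanSpace ℝ (Fin m)),
      ‖v - vt‖ ≤ M * Real.sqrt m * κG * Δ := by
  intro Δ hΔ vt hvt
  obtain ⟨w, hw, rfl⟩ := hvt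
  refine ⟨∑ i, w i • gradient (F i) xbar, ⟨w, hw, rfl⟩, ?_⟩
  have hΔ0 : 0 < Δ := hΔ.1
  have hwM : ‖w‖ ≤ M := by
    rw [hM]
    exact le_csSup (subdiff_bddAbove g hgbot _ hdom) ⟨w, hw, rfl⟩
  have hgrad : ∀ i : Fin m, ‖gradient (F i) xbar - gradient (Ft Δ i) xbar‖ ≤ κG * Δ :=
    fun i => (hfl Δ hΔ i xbar (mem_ball_self hΔ0)).2
  calc ‖(∑ i, w i • gradient (F i) xbar) - ∑ i, w i • gradient (Ft Δ i) xbar‖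
      = ‖∑ i, w i • (gradient (F i) xbar - gradient (Ft Δ i) xbar)‖ := by
        rw [← Finset.sum_sub_distrib]
        congr 1
        exact Finset.sum_congr rfl fun i _ => (smul_sub (w i) _ _).symm
    _ ≤ ∑ i, ‖w i • (gradient (F i) xbar - gradient (Ft Δ i) xbar)‖ :=
        norm_sum_le _ _
    _ = ∑ i, |w i| * ‖gradient (F i) xbar - gradient (Ft Δ i) xbar‖ := by
        exact Finset.sum_congr rfl fun i _ => by rw [norm_smul, Real.norm_eq_abs]
    _ ≤ ∑ i, |w i| * (κG * Δ) :=
        Finset.sum_le_sum fun i _ =>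
          mul_le_mul_of_nonneg_left (hgrad i) (abs_nonneg _)
    _ = (∑ i, |w i|) * (κG * Δ) := by rw [Finset.sum_mul]
    _ ≤ (Real.sqrt m * ‖w‖) * (κG * Δ) :=
        mul_le_mul_of_nonneg_right (sum_abs_le_sqrt_mul_norm w)
          (by positivity)
    _ ≤ (Real.sqrt m * M) * (κG * Δ) :=
        mul_le_mul_of_nonneg_right
          (mul_le_mul_of_nonneg_left hwM (Real.sqrt_nonneg _)) (by positivity)
    _ = M * Real.sqrt m * κG * Δ := by ring
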